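/- Let v = (v_0,...,v_{2k}) ∈ ℝ^{2k+1} with v_0 > 0 be a singular sequence of rank r ≤ k with A_v positive semidefinite. Then v is positively recursively generated (i.e., the recursion v_j = Σ_{i=0}^{r-1} φ_i v_{j-r+i} holds also for j = 2k) if and only if rank A_v(k-1) = rank A_v, where A_v(k-1) is the top-left k×k corner of A_v. -/

import Mathlib

open Matrix MeasureTheory

noncomputable section

/-- The `(k+1) × (k+1)` Hankel matrix `A_v = (v_{i+j})_{i,j=0}^k`. -/
def hankel (k : ℕ) (v : ℕ → ℝ) : Matrix (Fin (k+1)) (Fin (k+1)) ℝ :=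
  Matrix.of fun i j => v (i.1 + j.1)

/-- The top-left `r × r` corner `A_v(r-1) = (v_{i+j})_{i,j=0}^{r-1}`. -/
def hcorner (v : ℕ → ℝ) (r : ℕ) : Matrix (Fin r) (Fin r) ℝ :=
  Matrix.of fun i j => v (i.1 + j.1)

/-- The `(j+1)`-th column of the Hankel matrix `A_v`. -/
def hcol (k : ℕ) (v : ℕ → ℝ) (j : ℕ) : Fin (k+1) → ℝ :=
  fun i => v (i.1 + j)

/-- `r = rank v`: column `v_r` lies in the span of the preceding columns, and `r`
is minimal with this property. -/
def seqRank (k : ℕ) (v : ℕ → ℝ) (r : ℕ) : Prop :=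
  hcol k v r ∈ Submodule.span ℝ (hcol k v '' {j | j < r}) ∧
  ∀ i < r, hcol k v i ∉ Submodule.span ℝ (hcol k v '' {j | j < i})

/-- `φ = A_v(r-1)⁻¹ (v_r,…,v_{2r-1})ᵀ`. -/
def phi (v : ℕ → ℝ) (r : ℕ) : Fin r → ℝ :=
  (hcorner v r)⁻¹.mulVec fun i => v (r + i.1)

namespace CF

/-- The defect of the recursion at step `m`. -/
def D (v : ℕ → ℝ) (r m : ℕ) : ℝ := v (m + r) - ∑ t : Fin r, phi v r t * v (m + t.1)

lemma sum_dot {ι : Type*} (s : Finset ι) {n : Type*} [Fintype n]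
    (f : ι → n → ℝ) (w : n → ℝ) :
    (∑ t ∈ s, f t) ⬝ᵥ w = ∑ t ∈ s, f t ⬝ᵥ w := by
  simp only [dotProduct, Finset.sum_apply, Finset.sum_mul]
  exact Finset.sum_comm

lemma hankel_transpose {k : ℕ} {v : ℕ → ℝ} (j : Fin (k+1)) :
    (hankel k v).col j = hcol k v j.1 := by
  funext i; rfl

lemma image_eq_range {k r : ℕ} {v : ℕ → ℝ} :
    hcol k v '' {j | j < r} = Set.range (fun t : Fin r => hcol k v t.1) := by
  ext x
  constructor
  · rintro ⟨j, hj, rfl⟩; exact ⟨⟨j, hj⟩, rfl⟩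
  · rintro ⟨t, rfl⟩; exact ⟨t.1, t.2, rfl⟩

lemma li_hcol {k r : ℕ} {v : ℕ → ℝ}
    (h2 : ∀ i < r, hcol k v i ∉ Submodule.span ℝ (hcol k v '' {j | j < i})) :
    LinearIndependent ℝ (fun t : Fin r => hcol k v t.1) := by
  classical
  rw [Fintype.linearIndependent_iff]
  intro g hg
  by_contra hne
  push_neg at hne
  obtain ⟨t0, ht0⟩ := hne
  set S : Finset (Fin r) := Finset.univ.filter (fun t => g t ≠ 0) with hS
  have hSne : S.Nonempty := ⟨t0, by simp [hS, ht0]⟩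
  set i := S.max' hSne with hi
  have hiS : i ∈ S := S.max'_mem hSne
  have hgi : g i ≠ 0 := by
    have := hiS
    rw [hS, Finset.mem_filter] at this
    exact this.2
  have hsum : ∑ t ∈ S, g t • hcol k v t.1 = 0 := by
    rw [← hg, hS]
    exact Finset.sum_filter_of_ne (fun t _ h hg0 => h (by rw [hg0, zero_smul]))
  have h1 : g i • hcol k v i.1 + ∑ t ∈ S.erase i, g t • hcol k v t.1 = 0 :=
    (Finset.add_sum_erase S (fun t => g t • hcol k v t.1) hiS).trans hsum
  have h3 : ∑ t ∈ S.erase i, g t • hcol k v t.1 = -(g i • hcol k v i.1) :=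
    eq_neg_of_add_eq_zero_right h1
  have h4 : hcol k v i.1 = ∑ t ∈ S.erase i, ((-(g i)⁻¹) * g t) • hcol k v t.1 := by
    have : ∑ t ∈ S.erase i, ((-(g i)⁻¹) * g t) • hcol k v t.1
        = (-(g i)⁻¹) • ∑ t ∈ S.erase i, g t • hcol k v t.1 := by
      rw [Finset.smul_sum]
      exact Finset.sum_congr rfl fun t _ => (smul_smul _ _ _).symm
    rw [this, h3, smul_neg, neg_smul, neg_neg, smul_smul, inv_mul_cancel₀ hgi, one_smul]
  refine absurd ?_ (h2 i.1 i.2)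
  rw [h4]
  refine Submodule.sum_smul_mem _ _ (fun t ht => Submodule.subset_span ⟨t.1, ?_, rfl⟩)
  have hle : t ≤ i := S.le_max' t (Finset.mem_of_mem_erase ht)
  have hne' : t ≠ i := Finset.ne_of_mem_erase ht
  exact lt_of_le_of_ne hle (fun h => hne' (Fin.ext (by exact_mod_cast congrArg Fin.val h)))

/-- Extension of a small vector to a big one, as a combination of `Pi.single`s. -/
lemma mulVec_singles {k r : ℕ} {v : ℕ → ℝ} (c : Fin r → ℝ) (f : Fin r → Fin (k+1)) :
    hankel k v *ᵥ (∑ t : Fin r, c t • (Pi.single (f t) 1 : Fin (k+1) → ℝ)) =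
      ∑ t : Fin r, c t • hcol k v (f t).1 := by
  rw [← Matrix.mulVecLin_apply, map_sum]
  refine Finset.sum_congr rfl fun t _ => ?_
  rw [LinearMap.map_smul, Matrix.mulVecLin_apply, Matrix.mulVec_single_one, hankel_transpose]

lemma dot_singles {k r : ℕ} (c : Fin r → ℝ) (f : Fin r → Fin (k+1)) (w : Fin (k+1) → ℝ) :
    (∑ t : Fin r, c t • (Pi.single (f t) 1 : Fin (k+1) → ℝ)) ⬝ᵥ w = ∑ t : Fin r, c t * w (f t) := by
  rw [sum_dot]
  refine Finset.sum_congr rfl fun t _ => ?_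
  rw [smul_dotProduct, single_dotProduct, one_mul, smul_eq_mul]

lemma corner_posDef {k r : ℕ} {v : ℕ → ℝ} (hr : r ≤ k)
    (hpsd : (hankel k v).PosSemidef)
    (li : LinearIndependent ℝ (fun t : Fin r => hcol k v t.1)) :
    (hcorner v r).PosDef := by
  classical
  rw [Matrix.posDef_iff_dotProduct_mulVec]
  constructor
  · ext i j
    simp [hcorner, Matrix.conjTranspose_apply, Nat.add_comm]
  intro x hx
  set y : Fin (k+1) → ℝ :=
    ∑ t : Fin r, x t • (Pi.single (⟨t.1, by omega⟩ : Fin (k+1)) 1 : Fin (k+1) → ℝ) with hy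
  have hAy : hankel k v *ᵥ y = ∑ t : Fin r, x t • hcol k v t.1 := by
    rw [hy, mulVec_singles]
  have hq : star x ⬝ᵥ ((hcorner v r) *ᵥ x) = y ⬝ᵥ (hankel k v *ᵥ y) := by
    rw [hAy, hy, dot_singles, star_trivial]
    simp only [mulVec, dotProduct, hcorner, Matrix.of_apply]
    refine Finset.sum_congr rfl fun t _ => ?_
    rw [Finset.mul_sum, Finset.sum_apply, Finset.mul_sum]
    refine Finset.sum_congr rfl fun s _ => ?_
    simp only [Pi.smul_apply, smul_eq_mul, hcol]
    ring
  rw [hq]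
  rcases lt_or_eq_of_le (hpsd.dotProduct_mulVec_nonneg y) with h | h
  · rwa [star_trivial] at h
  exfalso
  have h0 : hankel k v *ᵥ y = 0 := (hpsd.dotProduct_mulVec_zero_iff y).mp h.symm
  rw [hAy] at h0
  have := Fintype.linearIndependent_iff.1 li x h0
  exact hx (funext this)

lemma corner_det_unit {k r : ℕ} {v : ℕ → ℝ} (hpd : (hcorner v r).PosDef) :
    IsUnit (hcorner v r).det := hpd.det_pos.ne'.isUnit

lemma corner_mulVec_inj {k r : ℕ} {v : ℕ → ℝ} (hpd : (hcorner v r).PosDef)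
    {a : Fin r → ℝ} (ha : (hcorner v r) *ᵥ a = 0) : a = 0 := by
  have h1 : (hcorner v r)⁻¹ *ᵥ ((hcorner v r) *ᵥ a) = a := by
    rw [Matrix.mulVec_mulVec, Matrix.nonsing_inv_mul _ (corner_det_unit (k := k) hpd),
      Matrix.one_mulVec]
  rw [ha, Matrix.mulVec_zero] at h1
  exact h1.symm

/-- The fundamental column relation: `c_r = ∑ φ_t c_t`. -/
lemma col_relation {k r : ℕ} {v : ℕ → ℝ} (hr : r ≤ k)
    (hpd : (hcorner v r).PosDef)
    (h1 : hcol k v r ∈ Submodule.span ℝ (hcol k v '' {j | j < r})) :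
    hcol k v r = ∑ t : Fin r, phi v r t • hcol k v t.1 := by
  rw [image_eq_range] at h1
  obtain ⟨a, ha⟩ := Submodule.mem_span_range_iff_exists_fun ℝ |>.1 h1
  have hMa : (hcorner v r) *ᵥ a = fun i => v (r + i.1) := by
    funext i
    have := congrFun ha (⟨i.1, by omega⟩ : Fin (k+1))
    simp only [Finset.sum_apply, Pi.smul_apply, smul_eq_mul, hcol] at this
    simp only [mulVec, dotProduct, hcorner, Matrix.of_apply]
    rw [Nat.add_comm r i.1, ← this]
    exact Finset.sum_congr rfl fun t _ => by ring
  have hphi : phi v r = a := by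
    rw [phi, ← hMa, Matrix.mulVec_mulVec,
      Matrix.nonsing_inv_mul _ (corner_det_unit (k := k) hpd), Matrix.one_mulVec]
  rw [hphi, ha]

lemma D_base {k r : ℕ} {v : ℕ → ℝ} (hr : r ≤ k)
    (hcolrel : hcol k v r = ∑ t : Fin r, phi v r t • hcol k v t.1) :
    ∀ m ≤ k, D v r m = 0 := by
  intro m hm
  have := congrFun hcolrel (⟨m, by omega⟩ : Fin (k+1))
  simp only [Finset.sum_apply, Pi.smul_apply, smul_eq_mul, hcol] at this
  rw [D, sub_eq_zero, this]

/-- Positivity propagates the recursion up to degree `2k-1`. -/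
lemma D_zero {k r : ℕ} {v : ℕ → ℝ} (hr : r ≤ k)
    (hpsd : (hankel k v).PosSemidef)
    (hbase : ∀ m ≤ k, D v r m = 0) :
    ∀ m, m ≤ k ∨ m + r + 1 ≤ 2*k → D v r m = 0 := by
  classical
  have key : ∀ s, ∀ m ≤ k + s, (m ≤ k ∨ m + r + 1 ≤ 2*k) → D v r m = 0 := by
    intro s
    induction s with
    | zero => intro m hm _; exact hbase m (by omega)
    | succ s ih =>
      intro m hm hcon
      rcases Nat.lt_or_ge m (k + s + 1) with h | h
      · exact ih m (by omega) hcon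
      have hm' : m = k + s + 1 := by omega
      have hcon' : m + r + 1 ≤ 2*k := by
        rcases hcon with h' | h'
        · omega
        · exact h'
      have hs : s + 1 + r + 1 ≤ k := by omega
      set σ := s + 1 with hσ
      set x : Fin (k+1) → ℝ :=
        (Pi.single (⟨σ + r, by omega⟩ : Fin (k+1)) 1 : Fin (k+1) → ℝ) -
          ∑ t : Fin r, phi v r t • (Pi.single (⟨σ + t.1, by have := t.2; omega⟩ : Fin (k+1)) 1 : Fin (k+1) → ℝ)
        with hxdef
      have hAx : hankel k v *ᵥ x =
          hcol k v (σ + r) - ∑ t : Fin r, phi v r t • hcol k v (σ + t.1) := by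
        rw [hxdef, Matrix.mulVec_sub,
          mulVec_singles (v := v) (phi v r) (fun t => ⟨σ + t.1, by have := t.2; omega⟩),
          Matrix.mulVec_single_one, hankel_transpose]
      have hAxi : ∀ i : Fin (k+1), (hankel k v *ᵥ x) i = D v r (i.1 + σ) := by
        intro i
        rw [hAx]
        simp only [Pi.sub_apply, Finset.sum_apply, Pi.smul_apply, smul_eq_mul, hcol, D]
        congr 1
        · congr 1; omega
        refine Finset.sum_congr rfl fun t _ => ?_
        congr 2
        omega
      have hq : x ⬝ᵥ (hankel k v *ᵥ x) = 0 := by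
        rw [hxdef, sub_dotProduct, dot_singles, single_dotProduct, one_mul]
        rw [← hxdef]
        have e1 : (hankel k v *ᵥ x) ⟨σ + r, by omega⟩ = D v r (σ + r + σ) := by
          rw [hAxi]
        have e2 : ∀ t : Fin r,
            (hankel k v *ᵥ x) ⟨σ + t.1, by have := t.2; omega⟩ = D v r (σ + t.1 + σ) := by
          intro t; rw [hAxi]
        rw [e1]
        have hz1 : D v r (σ + r + σ) = 0 := by
          apply ih (σ + r + σ) (by omega)
          right; omega
        rw [hz1]
        have hz2 : ∀ t : Fin r, phi v r t * (hankel k v *ᵥ x) ⟨σ + t.1, by have := t.2; omega⟩ = 0 := by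
          intro t
          rw [e2 t]
          have : D v r (σ + t.1 + σ) = 0 := by
            apply ih (σ + t.1 + σ) (by have := t.2; omega)
            right; have := t.2; omega
          rw [this, mul_zero]
        rw [Finset.sum_congr rfl (fun t _ => hz2 t), Finset.sum_const_zero]
        ring
      have hAx0 : hankel k v *ᵥ x = 0 := by
        rw [← hpsd.dotProduct_mulVec_zero_iff x, star_trivial]
        exact hq
      have := hAxi ⟨k, by omega⟩
      rw [hAx0] at this
      simp only [Pi.zero_apply] at this
      rw [hm', show k + s + 1 = k + σ by omega]
      rw [show (k : ℕ) + σ = (⟨k, by omega⟩ : Fin (k+1)).1 + σ from rfl]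
      exact this.symm
  exact fun m hm => key m m (by omega) hm


lemma mem_span_g {k r : ℕ} {v : ℕ → ℝ} (hr : r ≤ k)
    (hD : ∀ m, m ≤ k ∨ m + r + 1 ≤ 2*k → D v r m = 0) :
    ∀ j, j < k → (fun i : Fin k => v (i.1 + j)) ∈
      Submodule.span ℝ (Set.range (fun (t : Fin r) (i : Fin k) => v (i.1 + t.1))) := by
  intro j
  induction j using Nat.strong_induction_on with
  | _ j IH =>
    intro hj
    rcases Nat.lt_or_ge j r with hjr | hjr
    · exact Submodule.subset_span ⟨⟨j, hjr⟩, rfl⟩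
    · have hexp : (fun i : Fin k => v (i.1 + j)) =
          ∑ t : Fin r, phi v r t • (fun i : Fin k => v (i.1 + (j - r + t.1))) := by
        funext i
        have hik := i.2
        rw [Finset.sum_apply]
        have hd := hD (i.1 + (j - r)) (Or.inr (by omega))
        simp only [D] at hd
        rw [sub_eq_zero] at hd
        rw [show i.1 + j = i.1 + (j - r) + r by omega, hd]
        refine Finset.sum_congr rfl fun t _ => ?_
        simp only [Pi.smul_apply, smul_eq_mul]
        congr 2
        omega
      rw [hexp]
      exact Submodule.sum_smul_mem _ _ fun t _ =>
        IH (j - r + t.1) (by have := t.2; omega) (by have := t.2; omega)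

lemma mem_span_G {k r : ℕ} {v : ℕ → ℝ} (hr : r ≤ k)
    (hDall : ∀ m, m + r ≤ 2*k → D v r m = 0) :
    ∀ j, j ≤ k → hcol k v j ∈
      Submodule.span ℝ (Set.range (fun t : Fin r => hcol k v t.1)) := by
  intro j
  induction j using Nat.strong_induction_on with
  | _ j IH =>
    intro hj
    rcases Nat.lt_or_ge j r with hjr | hjr
    · exact Submodule.subset_span ⟨⟨j, hjr⟩, rfl⟩
    · have hexp : hcol k v j = ∑ t : Fin r, phi v r t • hcol k v (j - r + t.1) := by
        funext i
        have hik := i.2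
        rw [Finset.sum_apply]
        have hd := hDall (i.1 + (j - r)) (by omega)
        simp only [D] at hd
        rw [sub_eq_zero] at hd
        simp only [hcol]
        rw [show i.1 + j = i.1 + (j - r) + r by omega, hd]
        refine Finset.sum_congr rfl fun t _ => ?_
        simp only [Pi.smul_apply, smul_eq_mul, hcol]
        congr 2
        omega
      rw [hexp]
      exact Submodule.sum_smul_mem _ _ fun t _ =>
        IH (j - r + t.1) (by have := t.2; omega) (by have := t.2; omega)

lemma li_corner_cols {k r : ℕ} {v : ℕ → ℝ} (hr : r ≤ k) (hpd : (hcorner v r).PosDef) :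
    LinearIndependent ℝ (fun (t : Fin r) (i : Fin k) => v (i.1 + t.1)) := by
  rw [Fintype.linearIndependent_iff]
  intro a ha
  have hMa : hcorner v r *ᵥ a = 0 := by
    funext t'
    have ht'k : t'.1 < k := lt_of_lt_of_le t'.2 hr
    have hc := congrFun ha ⟨t'.1, ht'k⟩
    simp only [Finset.sum_apply, Pi.smul_apply, smul_eq_mul, Pi.zero_apply] at hc
    simp only [mulVec, dotProduct, hcorner, Matrix.of_apply, Pi.zero_apply]
    rw [← hc]
    exact Finset.sum_congr rfl fun t _ => by ring
  have hz := corner_mulVec_inj (k := k) hpd hMa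
  exact fun t => congrFun hz t

lemma rank_corner {k r : ℕ} {v : ℕ → ℝ} (hr : r ≤ k) (hpd : (hcorner v r).PosDef)
    (hD : ∀ m, m ≤ k ∨ m + r + 1 ≤ 2*k → D v r m = 0) :
    (hcorner v k).rank = r := by
  classical
  rw [Matrix.rank_eq_finrank_span_cols]
  have hset : Submodule.span ℝ (Set.range (hcorner v k).col) =
      Submodule.span ℝ (Set.range (fun (t : Fin r) (i : Fin k) => v (i.1 + t.1))) := by
    apply le_antisymm
    · rw [Submodule.span_le]
      rintro _ ⟨j, rfl⟩
      exact mem_span_g hr hD j.1 j.2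
    · apply Submodule.span_mono
      rintro _ ⟨t, rfl⟩
      exact ⟨⟨t.1, lt_of_lt_of_le t.2 hr⟩, rfl⟩
  rw [hset, finrank_span_eq_card (li_corner_cols hr hpd), Fintype.card_fin]

lemma rank_hankel {k r : ℕ} {v : ℕ → ℝ} (hr : r ≤ k)
    (li : LinearIndependent ℝ (fun t : Fin r => hcol k v t.1))
    (hDall : ∀ m, m + r ≤ 2*k → D v r m = 0) :
    (hankel k v).rank = r := by
  classical
  rw [Matrix.rank_eq_finrank_span_cols]
  have hset : Submodule.span ℝ (Set.range (hankel k v).col) =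
      Submodule.span ℝ (Set.range (fun t : Fin r => hcol k v t.1)) := by
    apply le_antisymm
    · rw [Submodule.span_le]
      rintro _ ⟨j, rfl⟩
      rw [hankel_transpose]
      exact mem_span_G hr hDall j.1 (by omega)
    · apply Submodule.span_mono
      rintro _ ⟨t, rfl⟩
      exact ⟨⟨t.1, by omega⟩, hankel_transpose _⟩
  rw [hset, finrank_span_eq_card li, Fintype.card_fin]

lemma D2k_of_rank {k r : ℕ} {v : ℕ → ℝ} (hr : r ≤ k) (hpd : (hcorner v r).PosDef)
    (li : LinearIndependent ℝ (fun t : Fin r => hcol k v t.1))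
    (hD : ∀ m, m ≤ k ∨ m + r + 1 ≤ 2*k → D v r m = 0)
    (hrk : (hankel k v).rank = r) :
    D v r (2*k - r) = 0 := by
  classical
  have hcolmem : ∀ j ≤ k, hcol k v j ∈ LinearMap.range (hankel k v).mulVecLin := by
    intro j hj
    exact ⟨(Pi.single (⟨j, by omega⟩ : Fin (k+1)) 1 : Fin (k+1) → ℝ), by
      rw [Matrix.mulVecLin_apply, Matrix.mulVec_single_one]
      exact hankel_transpose _⟩
  have hle : Submodule.span ℝ (Set.range fun t : Fin r => hcol k v t.1)
      ≤ LinearMap.range (hankel k v).mulVecLin := by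
    rw [Submodule.span_le]; rintro _ ⟨t, rfl⟩; exact hcolmem t.1 (by have := t.2; omega)
  have heq : Submodule.span ℝ (Set.range fun t : Fin r => hcol k v t.1)
      = LinearMap.range (hankel k v).mulVecLin := by
    apply Submodule.eq_of_le_of_finrank_le hle
    rw [finrank_span_eq_card li, Fintype.card_fin]
    exact le_of_eq hrk
  set w : Fin (k+1) → ℝ := hcol k v k - ∑ t : Fin r, phi v r t • hcol k v (k - r + t.1) with hw
  have hwmem : w ∈ Submodule.span ℝ (Set.range fun t : Fin r => hcol k v t.1) := by
    rw [heq, hw]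
    exact sub_mem (hcolmem k le_rfl)
      (Submodule.sum_smul_mem _ _ fun t _ => hcolmem _ (by have := t.2; omega))
  obtain ⟨b, hb⟩ := (Submodule.mem_span_range_iff_exists_fun ℝ).1 hwmem
  have hMb : hcorner v r *ᵥ b = 0 := by
    funext t'
    have ht'k : t'.1 < k + 1 := by have := t'.2; omega
    have hc := congrFun hb ⟨t'.1, ht'k⟩
    have hwt' : w ⟨t'.1, ht'k⟩ = 0 := by
      rw [hw]
      simp only [Pi.sub_apply, Finset.sum_apply, Pi.smul_apply, smul_eq_mul, hcol]
      have hd := hD (t'.1 + (k - r)) (Or.inr (by have := t'.2; omega))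
      simp only [D] at hd
      rw [sub_eq_zero] at hd
      rw [show t'.1 + k = t'.1 + (k - r) + r by have := t'.2; omega, hd, sub_eq_zero]
      refine Finset.sum_congr rfl fun t _ => ?_
      congr 2
      omega
    rw [hwt'] at hc
    simp only [Finset.sum_apply, Pi.smul_apply, smul_eq_mul, hcol] at hc
    simp only [mulVec, dotProduct, hcorner, Matrix.of_apply, Pi.zero_apply]
    rw [← hc]
    exact Finset.sum_congr rfl fun t _ => by ring
  have hb0 : b = 0 := corner_mulVec_inj (k := k) hpd hMb
  have hw0 : w = 0 := by
    rw [← hb, hb0]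
    simp
  have hwk := congrFun hw0 ⟨k, by omega⟩
  rw [hw] at hwk
  simp only [Pi.sub_apply, Finset.sum_apply, Pi.smul_apply, smul_eq_mul, hcol,
    Pi.zero_apply] at hwk
  simp only [D]
  rw [show 2*k - r + r = k + k by omega]
  have hsum : ∑ t : Fin r, phi v r t * v (2*k - r + t.1)
      = ∑ t : Fin r, phi v r t * v (k + (k - r + t.1)) :=
    Finset.sum_congr rfl fun t _ => by congr 2; omega
  rw [hsum]
  exact hwk

end CF

theorem stmt3 (k r : ℕ) (v : ℕ → ℝ) (hv0 : 0 < v 0)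
    (hpsd : (hankel k v).PosSemidef) (hsing : (hankel k v).det = 0)
    (hr : r ≤ k) (hrank : seqRank k v r) :
    (v (2*k) = ∑ i : Fin r, phi v r i * v (2*k - r + i.1)) ↔
      (hcorner v k).rank = (hankel k v).rank := by
  classical
  have li := CF.li_hcol hrank.2
  have hpd : (hcorner v r).PosDef := CF.corner_posDef hr hpsd li
  have hcolrel := CF.col_relation hr hpd hrank.1
  have hbase := CF.D_base hr hcolrel
  have hD := CF.D_zero hr hpsd hbase
  have hrc : (hcorner v k).rank = r := CF.rank_corner hr hpd hD
  have hLHS : (v (2*k) = ∑ i : Fin r, phi v r i * v (2*k - r + i.1)) ↔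
      CF.D v r (2*k - r) = 0 := by
    simp only [CF.D]
    rw [show 2*k - r + r = 2*k by omega, sub_eq_zero]
  rw [hLHS, hrc]
  constructor
  · intro h2k
    have hDall : ∀ m, m + r ≤ 2*k → CF.D v r m = 0 := by
      intro m hm
      rcases Nat.lt_or_ge (m + r) (2*k) with h | h
      · exact hD m (Or.inr (by omega))
      · have : m = 2*k - r := by omega
        rw [this]; exact h2k
    exact (CF.rank_hankel hr li hDall).symm
  · intro hrk
    exact CF.D2k_of_rank hr hpd li hD hrk.symm
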